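/- In a finite DAG, if a vertex X has exactly one source ancestor S, then Φ(X) ⊆ Φ(S), S ∈ Φ(X), and S is the only source contained in Φ(X) (so removing Φ(X) from the vertex set removes exactly one source). -/
import Mathlib


/-- Two vertices are dependent if they share a common ancestor
(ancestorship via the reflexive-transitive closure of the edge relation). -/
def Dep {V : Type*} (E : V → V → Prop) (x y : V) : Prop :=
  ∃ a, Relation.ReflTransGen E a x ∧ Relation.ReflTransGen E a y

/-- The dependence set of a vertex: all vertices dependent on it. -/
def Phi {V : Type*} (E : V → V → Prop) (x : V) : Set V := {y | Dep E x y}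

/-- Every vertex in a finite DAG has a source ancestor. -/
lemma exists_source_ancestor {V : Type*} [Fintype V] (E : V → V → Prop)
    (hdag : Irreflexive (Relation.TransGen E)) (a : V) :
    ∃ s, (∀ A, ¬ E A s) ∧ Relation.ReflTransGen E s a := by
  have hwf : WellFounded (Relation.TransGen E) := by
    have : IsTrans V (Relation.TransGen E) := ⟨fun _ _ _ => Relation.TransGen.trans⟩
    have : IsIrrefl V (Relation.TransGen E) := ⟨hdag⟩
    exact Finite.wellFounded_of_trans_of_irrefl _
  have hwfE : WellFounded E := Subrelation.wf (fun h => Relation.TransGen.single h) hwf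
  induction a using WellFounded.induction hwfE with
  | _ a ih =>
    by_cases h : ∀ A, ¬ E A a
    · exact ⟨a, h, Relation.ReflTransGen.refl⟩
    · push_neg at h
      obtain ⟨b, hb⟩ := h
      obtain ⟨s, hs, hsb⟩ := ih b hb
      exact ⟨s, hs, hsb.trans (Relation.ReflTransGen.single hb)⟩

lemma source_eq {V : Type*} {E : V → V → Prop} {a T : V}
    (hT : ∀ A, ¬ E A T) (h : Relation.ReflTransGen E a T) : a = T := by
  cases h.cases_tail with
  | inl h => exact h.symm
  | inr h => obtain ⟨c, _, hc⟩ := h; exact absurd hc (hT c)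

/-- If a vertex X has exactly one source ancestor S, then Φ(X) ⊆ Φ(S),
S ∈ Φ(X), and S is the only source contained in Φ(X). -/
theorem unique_source_ancestor_dep_set {V : Type*} [Fintype V] (E : V → V → Prop)
    (hdag : Irreflexive (Relation.TransGen E))
    (X S : V) (hS : ∀ A, ¬ E A S) (hanc : Relation.ReflTransGen E S X)
    (huniq : ∀ T : V, (∀ A, ¬ E A T) → Relation.ReflTransGen E T X → T = S) :
    Phi E X ⊆ Phi E S ∧ S ∈ Phi E X ∧
      ∀ T ∈ Phi E X, (∀ A, ¬ E A T) → T = S := by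
  refine ⟨?_, ⟨S, hanc, Relation.ReflTransGen.refl⟩, ?_⟩
  · rintro y ⟨a, haX, hay⟩
    obtain ⟨s, hs, hsa⟩ := exists_source_ancestor E hdag a
    have : s = S := huniq s hs (hsa.trans haX)
    exact ⟨S, Relation.ReflTransGen.refl, this ▸ hsa.trans hay⟩
  · rintro T ⟨a, haX, haT⟩ hT
    exact huniq T hT ((source_eq hT haT) ▸ haX)
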